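/- Let $X$ be a compact metric space, $T : X \to X$ continuous, and $(f_n)$ a sequence of continuous functions with $f_{n+m} \leq f_n + f_m \circ T^n$ pointwise. Let $(\nu_n)$ be Borel probability measures, $\mu_n = \frac1n \sum_{i=0}^{n-1} T^i_* \nu_n$, and suppose $\mu_{n_i} \to \mu$ weakly along a subsequence, with $\mu$ $T$-invariant. Then for every $k \geq 1$: $\limsup_{i\to\infty} \frac{1}{n_i}\int f_{n_i}\,d\nu_{n_i} \leq \frac{1}{k}\int f_k\,d\mu$. Consequently $\limsup_{i\to\infty} \frac{1}{n_i}\int f_{n_i}\,d\nu_{n_i} \leq \lim_{k\to\infty}\frac1k\int f_k\,d\mu$. -/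

import Mathlib

open Filter MeasureTheory
open scoped ENNReal

private lemma aux_iterate {X : Type*} (T : X → X) (f : ℕ → X → ℝ)
    (hsub : ∀ m n : ℕ, 1 ≤ m → 1 ≤ n → ∀ x, f (m + n) x ≤ f m x + f n (T^[m] x))
    {k s : ℕ} (hk : 1 ≤ k) (hs : 1 ≤ s) (x : X) :
    ∀ q : ℕ, f (s + q * k) x ≤ f s x + ∑ j ∈ Finset.range q, f k (T^[s + j * k] x) := by
  intro q
  induction q with
  | zero => simp
  | succ q ih =>
    have h1 : f (s + (q + 1) * k) x ≤ f (s + q * k) x + f k (T^[s + q * k] x) := by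
      have h := hsub (s + q * k) k (by omega) hk x
      rw [show s + (q + 1) * k = (s + q * k) + k from by ring]
      exact h
    rw [Finset.sum_range_succ]
    linarith

private lemma aux_key {X : Type*} (T : X → X) (f : ℕ → X → ℝ)
    (hsub : ∀ m n : ℕ, 1 ≤ m → 1 ≤ n → ∀ x, f (m + n) x ≤ f m x + f n (T^[m] x))
    {k : ℕ} (hk : 1 ≤ k) {B : ℝ} (hB0 : 0 ≤ B)
    (hB : ∀ m : ℕ, 1 ≤ m → m ≤ 2 * k → ∀ x, |f m x| ≤ B)
    {n : ℕ} (hn : 4 * k ≤ n) (x : X) :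
    (k : ℝ) * f n x ≤ (∑ m ∈ Finset.range n, f k (T^[m] x)) + 5 * k * B := by
  have hk0 : 0 < k := hk
  set q : ℕ → ℕ := fun s => (n - s - k) / k with hq
  have hfact : ∀ s, 1 ≤ s → s ≤ k →
      s + q s * k ≤ n ∧ k ≤ n - (s + q s * k) ∧ n - (s + q s * k) ≤ 2 * k ∧
        n + 1 ≤ q s * k + 3 * k := by
    intro s h1 h2
    have hP1 : q s * k ≤ n - s - k := Nat.div_mul_le_self _ _
    have hP2 : n - s - k < q s * k + k := by
      have h := Nat.div_add_mod (n - s - k) k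
      have h2 := Nat.mod_lt (n - s - k) hk0
      have h3 : k * ((n - s - k) / k) = q s * k := by rw [hq]; ring
      omega
    omega
  -- per-residue inequality
  have hmain : ∀ s, 1 ≤ s → s ≤ k →
      f n x ≤ 2 * B + ∑ j ∈ Finset.range (q s), f k (T^[s + j * k] x) := by
    intro s h1 h2
    obtain ⟨hle, hr1, hr2, _⟩ := hfact s h1 h2
    have e1 : f n x ≤ f (s + q s * k) x + f (n - (s + q s * k)) (T^[s + q s * k] x) := by
      have h := hsub (s + q s * k) (n - (s + q s * k)) (by omega) (by omega) x
      rwa [show (s + q s * k) + (n - (s + q s * k)) = n from by omega] at h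
    have e2 := aux_iterate T f hsub hk h1 x (q s)
    have e3 : f (n - (s + q s * k)) (T^[s + q s * k] x) ≤ B :=
      le_of_abs_le (hB _ (by omega) (by omega) _)
    have e4 : f s x ≤ B := le_of_abs_le (hB s h1 (by omega) x)
    linarith
  have card1 : (Finset.Icc 1 k).card = k := by rw [Nat.card_Icc]; omega
  -- sum over residues
  have hsum : (k : ℝ) * f n x ≤ 2 * k * B +
      ∑ s ∈ Finset.Icc 1 k, ∑ j ∈ Finset.range (q s), f k (T^[s + j * k] x) := by
    calc (k : ℝ) * f n x = ∑ _s ∈ Finset.Icc 1 k, f n x := by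
          rw [Finset.sum_const, card1, nsmul_eq_mul]
      _ ≤ ∑ s ∈ Finset.Icc 1 k, (2 * B + ∑ j ∈ Finset.range (q s), f k (T^[s + j * k] x)) := by
          refine Finset.sum_le_sum fun s hs => ?_
          obtain ⟨h1, h2⟩ := Finset.mem_Icc.mp hs
          exact hmain s h1 h2
      _ = _ := by
          rw [Finset.sum_add_distrib, Finset.sum_const, card1, nsmul_eq_mul]; ring
  -- the index set
  set I : Finset ℕ :=
    (Finset.Icc 1 k).biUnion (fun s => (Finset.range (q s)).image (fun j => s + j * k)) with hI
  have hmodinj : ∀ s s', 1 ≤ s → s ≤ k → 1 ≤ s' → s' ≤ k → s % k = s' % k → s = s' := by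
    intro s s' a b c d h
    rcases eq_or_lt_of_le b with rfl | hb
    · rcases eq_or_lt_of_le d with h' | hd
      · omega
      · rw [Nat.mod_self, Nat.mod_eq_of_lt hd] at h; omega
    · rcases eq_or_lt_of_le d with rfl | hd
      · rw [Nat.mod_eq_of_lt hb, Nat.mod_self] at h; omega
      · rwa [Nat.mod_eq_of_lt hb, Nat.mod_eq_of_lt hd] at h
  have hdisj : ∀ s ∈ Finset.Icc 1 k, ∀ s' ∈ Finset.Icc 1 k, s ≠ s' →
      Disjoint ((Finset.range (q s)).image (fun j => s + j * k))
        ((Finset.range (q s')).image (fun j => s' + j * k)) := by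
    intro s hs s' hs' hne
    obtain ⟨a1, a2⟩ := Finset.mem_Icc.mp hs
    obtain ⟨b1, b2⟩ := Finset.mem_Icc.mp hs'
    rw [Finset.disjoint_left]
    rintro m hm1 hm2
    obtain ⟨j1, _, rfl⟩ := Finset.mem_image.mp hm1
    obtain ⟨j2, _, e⟩ := Finset.mem_image.mp hm2
    have h1 : (s + j1 * k) % k = s % k := Nat.add_mul_mod_self_right s j1 k
    have h2 : (s' + j2 * k) % k = s' % k := Nat.add_mul_mod_self_right s' j2 k
    exact hne (hmodinj s s' a1 a2 b1 b2 (by rw [← h1, ← e, h2]))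
  have hinj : ∀ s : ℕ, Function.Injective (fun j => s + j * k) := by
    intro s j1 j2 h
    simp only at h
    exact Nat.eq_of_mul_eq_mul_right hk0 (by omega)
  have hIsum : ∑ m ∈ I, f k (T^[m] x) =
      ∑ s ∈ Finset.Icc 1 k, ∑ j ∈ Finset.range (q s), f k (T^[s + j * k] x) := by
    rw [hI, Finset.sum_biUnion (fun a ha b hb hab => hdisj a ha b hb hab)]
    refine Finset.sum_congr rfl fun s _ => ?_
    rw [Finset.sum_image (fun a _ b _ h => hinj s h)]
  have hIcard : I.card = ∑ s ∈ Finset.Icc 1 k, q s := by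
    rw [hI, Finset.card_biUnion hdisj]
    refine Finset.sum_congr rfl fun s _ => ?_
    rw [Finset.card_image_of_injective _ (hinj s), Finset.card_range]
  have hIsub : I ⊆ Finset.range n := by
    intro m hm
    rw [hI, Finset.mem_biUnion] at hm
    obtain ⟨s, hs, hm⟩ := hm
    obtain ⟨h1, h2⟩ := Finset.mem_Icc.mp hs
    obtain ⟨j, hj, rfl⟩ := Finset.mem_image.mp hm
    rw [Finset.mem_range] at hj ⊢
    obtain ⟨hle, hr1, _, _⟩ := hfact s h1 h2
    have h4 : (j + 1) * k ≤ q s * k := Nat.mul_le_mul_right k hj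
    rw [add_one_mul] at h4
    omega
  have hcard2 : n + 1 ≤ I.card + 3 * k := by
    have hs4 : ∀ s ∈ Finset.Icc 1 k, n + 1 ≤ q s * k + 3 * k := by
      intro s hs
      obtain ⟨h1, h2⟩ := Finset.mem_Icc.mp hs
      exact (hfact s h1 h2).2.2.2
    have h5 := Finset.sum_le_sum hs4
    rw [Finset.sum_const, card1, Finset.sum_add_distrib, ← Finset.sum_mul,
      Finset.sum_const, card1, smul_eq_mul, smul_eq_mul] at h5
    have h6 : (n + 1) * k ≤ (I.card + 3 * k) * k := by
      rw [hIcard]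
      calc (n + 1) * k = k * (n + 1) := by ring
        _ ≤ (∑ s ∈ Finset.Icc 1 k, q s) * k + k * (3 * k) := h5
        _ = (∑ s ∈ Finset.Icc 1 k, q s + 3 * k) * k := by ring
    exact Nat.le_of_mul_le_mul_right h6 hk0
  have hsplit := Finset.sum_sdiff (f := fun m => f k (T^[m] x)) hIsub
  have c1 : ((Finset.range n \ I).card : ℝ) ≤ 3 * k := by
    have : (Finset.range n \ I).card ≤ 3 * k := by
      rw [Finset.card_sdiff_of_subset hIsub, Finset.card_range]; omega
    exact_mod_cast le_trans (Nat.cast_le.mpr this) (by push_cast; ring_nf; rfl)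
  have hsd : -(3 * k * B) ≤ ∑ m ∈ Finset.range n \ I, f k (T^[m] x) := by
    have hlow : ∀ m ∈ Finset.range n \ I, -B ≤ f k (T^[m] x) := fun m _ =>
      neg_le_of_abs_le (hB k hk (by omega) _)
    calc -(3 * k * B) ≤ -(((Finset.range n \ I).card : ℝ) * B) := by
          have := mul_le_mul_of_nonneg_right c1 hB0
          linarith
      _ = ((Finset.range n \ I).card : ℝ) * (-B) := by ring
      _ = ∑ _m ∈ Finset.range n \ I, (-B) := by rw [Finset.sum_const, nsmul_eq_mul]
      _ ≤ _ := Finset.sum_le_sum hlow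
  linarith [hsum, hIsum, hsplit, hsd]

theorem limsup_integral_le_subadditive_limit {X : Type*} [MetricSpace X] [CompactSpace X]
    [MeasurableSpace X] [BorelSpace X]
    (T : X → X) (hT : Continuous T)
    (f : ℕ → X → ℝ) (hf : ∀ n, Continuous (f n))
    (hsub : ∀ m n : ℕ, 1 ≤ m → 1 ≤ n → ∀ x, f (m + n) x ≤ f m x + f n (T^[m] x))
    (ν : ℕ → Measure X) (hν : ∀ n, IsProbabilityMeasure (ν n))
    (μ : Measure X) [IsProbabilityMeasure μ] (hinv : Measure.map T μ = μ)
    (φ : ℕ → ℕ) (hφ : StrictMono φ)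
    (hconv : ∀ g : C(X, ℝ),
      Tendsto (fun i : ℕ =>
          ∫ x, g x ∂(((φ i : ℝ≥0∞))⁻¹ •
            ∑ s ∈ Finset.range (φ i), Measure.map (T^[s]) (ν (φ i))))
        atTop (nhds (∫ x, g x ∂μ))) :
    (∀ k : ℕ, 1 ≤ k →
      limsup (fun i : ℕ =>
          (((1 / (φ i : ℝ)) * ∫ x, f (φ i) x ∂(ν (φ i)) : ℝ) : EReal)) atTop ≤
        (((1 / (k : ℝ)) * ∫ x, f k x ∂μ : ℝ) : EReal)) ∧
    ∀ L : EReal,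
      Tendsto (fun k : ℕ => (((1 / (k : ℝ)) * ∫ x, f k x ∂μ : ℝ) : EReal)) atTop (nhds L) →
      limsup (fun i : ℕ =>
          (((1 / (φ i : ℝ)) * ∫ x, f (φ i) x ∂(ν (φ i)) : ℝ) : EReal)) atTop ≤ L := by
  have hint : ∀ (g : X → ℝ), Continuous g → ∀ (μ' : Measure X), IsFiniteMeasure μ' →
      Integrable g μ' := fun g hg μ' _ =>
    (BoundedContinuousFunction.mkOfCompact ⟨g, hg⟩).integrable μ'
  have hTm : ∀ s : ℕ, Measurable (T^[s]) := fun s => (hT.iterate s).measurable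
  have hpart1 : ∀ k : ℕ, 1 ≤ k →
      limsup (fun i : ℕ =>
          (((1 / (φ i : ℝ)) * ∫ x, f (φ i) x ∂(ν (φ i)) : ℝ) : EReal)) atTop ≤
        (((1 / (k : ℝ)) * ∫ x, f k x ∂μ : ℝ) : EReal) := by
    intro k hk
    have hk0 : (0 : ℝ) < k := by exact_mod_cast hk
    -- the bound B
    set B : ℝ := ∑ m ∈ Finset.Icc 1 (2 * k),
      ‖BoundedContinuousFunction.mkOfCompact (⟨f m, hf m⟩ : C(X, ℝ))‖ with hBdef
    have hB0 : 0 ≤ B := Finset.sum_nonneg fun _ _ => norm_nonneg _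
    have hB : ∀ m : ℕ, 1 ≤ m → m ≤ 2 * k → ∀ x, |f m x| ≤ B := by
      intro m h1 h2 x
      have e1 : |f m x| ≤ ‖BoundedContinuousFunction.mkOfCompact (⟨f m, hf m⟩ : C(X, ℝ))‖ := by
        have := BoundedContinuousFunction.norm_coe_le_norm
          (BoundedContinuousFunction.mkOfCompact (⟨f m, hf m⟩ : C(X, ℝ))) x
        simpa [Real.norm_eq_abs] using this
      refine le_trans e1 ?_
      exact Finset.single_le_sum (f := fun m =>
        ‖BoundedContinuousFunction.mkOfCompact (⟨f m, hf m⟩ : C(X, ℝ))‖)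
        (fun _ _ => norm_nonneg _) (Finset.mem_Icc.mpr ⟨h1, h2⟩)
    -- average measure and its integral
    set A : ℕ → ℝ := fun i => ∫ x, f k x ∂(((φ i : ℝ≥0∞))⁻¹ •
        ∑ s ∈ Finset.range (φ i), Measure.map (T^[s]) (ν (φ i))) with hAdef
    have hAeq : ∀ i : ℕ, 1 ≤ φ i →
        A i = (1 / (φ i : ℝ)) * ∑ s ∈ Finset.range (φ i),
          ∫ x, f k (T^[s] x) ∂(ν (φ i)) := by
      intro i hi
      haveI := hν (φ i)
      have hmaps : ∀ s ∈ Finset.range (φ i),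
          Integrable (f k) (Measure.map (T^[s]) (ν (φ i))) := by
        intro s _
        haveI : IsProbabilityMeasure (Measure.map (T^[s]) (ν (φ i))) :=
          Measure.isProbabilityMeasure_map (hTm s).aemeasurable
        exact hint (f k) (hf k) _ inferInstance
      rw [hAdef]
      simp only
      rw [integral_smul_measure, integral_finset_sum_measure hmaps]
      have : ∀ s ∈ Finset.range (φ i),
          ∫ x, f k x ∂(Measure.map (T^[s]) (ν (φ i))) = ∫ x, f k (T^[s] x) ∂(ν (φ i)) := by
        intro s _
        exact integral_map (hTm s).aemeasurable (hf k).aestronglyMeasurable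
      rw [Finset.sum_congr rfl this]
      simp [ENNReal.toReal_inv, smul_eq_mul, one_div]
    -- the eventual inequality
    have hev : ∀ i : ℕ, 4 * k ≤ φ i →
        (1 / (φ i : ℝ)) * ∫ x, f (φ i) x ∂(ν (φ i)) ≤
          (1 / (k : ℝ)) * A i + 5 * B / (φ i : ℝ) := by
      intro i hni
      set n := φ i with hndef
      haveI := hν n
      have hn1 : 1 ≤ n := by omega
      have hn0 : (0 : ℝ) < n := by exact_mod_cast hn1
      have hkey : ∀ x, (k : ℝ) * f n x ≤
          (∑ m ∈ Finset.range n, f k (T^[m] x)) + 5 * k * B :=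
        fun x => aux_key T f hsub hk hB0 hB hni x
      have hic : ∀ m : ℕ, Integrable (fun x => f k (T^[m] x)) (ν n) := fun m =>
        hint _ ((hf k).comp (hT.iterate m)) _ inferInstance
      have hintsum : Integrable (fun x => (∑ m ∈ Finset.range n, f k (T^[m] x)) + 5 * k * B)
          (ν n) :=
        (integrable_finset_sum _ fun m _ => hic m).add (integrable_const _)
      have hint1 : Integrable (fun x => (k : ℝ) * f n x) (ν n) :=
        (hint (f n) (hf n) _ inferInstance).const_mul _
      have hi1 := integral_mono hint1 hintsum hkey
      rw [integral_const_mul] at hi1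
      rw [integral_add (integrable_finset_sum _ fun m _ => hic m) (integrable_const _)] at hi1
      rw [integral_finset_sum _ (fun m _ => hic m)] at hi1
      simp only [integral_const, measure_univ, probReal_univ, ENNReal.toReal_one, smul_eq_mul, one_mul] at hi1
      -- hi1 : k * ∫ f n dν n ≤ ∑ + 5*k*B
      have hS : ∑ m ∈ Finset.range n, ∫ x, f k (T^[m] x) ∂(ν n) = (n : ℝ) * A i := by
        rw [hAeq i hn1, ← mul_assoc, mul_one_div_cancel (ne_of_gt hn0), one_mul]
      rw [hS] at hi1
      set In := ∫ x, f n x ∂(ν n) with hIn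
      have goal2 : In / (n : ℝ) ≤ A i / (k : ℝ) + 5 * B / (n : ℝ) := by
        rw [div_add_div _ _ (ne_of_gt hk0) (ne_of_gt hn0),
          div_le_div_iff₀ hn0 (by positivity)]
        nlinarith [mul_le_mul_of_nonneg_right hi1 (le_of_lt hn0)]
      calc (1 / (n : ℝ)) * In = In / (n : ℝ) := by ring
        _ ≤ A i / (k : ℝ) + 5 * B / (n : ℝ) := goal2
        _ = (1 / (k : ℝ)) * A i + 5 * B / (n : ℝ) := by ring
    -- pass to limsup
    have htop : Tendsto φ atTop atTop := hφ.tendsto_atTop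
    have hVt : Tendsto (fun i => ((1 / (k : ℝ)) * A i + 5 * B / (φ i : ℝ)))
        atTop (nhds ((1 / (k : ℝ)) * ∫ x, f k x ∂μ)) := by
      have h1 : Tendsto A atTop (nhds (∫ x, f k x ∂μ)) := hconv ⟨f k, hf k⟩
      have h2 : Tendsto (fun i => 5 * B / (φ i : ℝ)) atTop (nhds 0) :=
        Tendsto.div_atTop tendsto_const_nhds (tendsto_natCast_atTop_atTop.comp htop)
      have h3 := (h1.const_mul (1 / (k : ℝ))).add h2
      simpa only [add_zero] using h3
    have hVt' : Tendsto (fun i => (((1 / (k : ℝ)) * A i + 5 * B / (φ i : ℝ) : ℝ) : EReal))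
        atTop (nhds (((1 / (k : ℝ)) * ∫ x, f k x ∂μ : ℝ) : EReal)) :=
      EReal.tendsto_coe.mpr hVt
    have hUV : ∀ᶠ i in atTop,
        (((1 / (φ i : ℝ)) * ∫ x, f (φ i) x ∂(ν (φ i)) : ℝ) : EReal) ≤
          (((1 / (k : ℝ)) * A i + 5 * B / (φ i : ℝ) : ℝ) : EReal) := by
      filter_upwards [htop.eventually_ge_atTop (4 * k)] with i hi
      exact EReal.coe_le_coe_iff.mpr (hev i hi)
    calc limsup (fun i : ℕ =>
          (((1 / (φ i : ℝ)) * ∫ x, f (φ i) x ∂(ν (φ i)) : ℝ) : EReal)) atTop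
        ≤ limsup (fun i => (((1 / (k : ℝ)) * A i + 5 * B / (φ i : ℝ) : ℝ) : EReal)) atTop :=
          limsup_le_limsup hUV
      _ = (((1 / (k : ℝ)) * ∫ x, f k x ∂μ : ℝ) : EReal) := hVt'.limsup_eq
  refine ⟨hpart1, fun L hL => ?_⟩
  exact ge_of_tendsto hL (eventually_atTop.mpr ⟨1, fun k hk => hpart1 k hk⟩)
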